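/- For every binary word w over {0,1}, val_Fc(101·w) = val_Fc(1·w), i.e., prepending the prefix 10 to a word starting with 1 does not change its Fibonacci's complement value. -/
import Mathlib


/-- Fibonacci sequence with F 0 = 1, F 1 = 2. -/
def F (n : ℕ) : ℕ := Nat.fib (n + 2)

/-- Fibonacci extended to integer indices ≥ -2, with F_{-2} = 0, F_{-1} = 1. -/
def Fz (m : ℤ) : ℤ := ((m + 2).toNat.fib : ℤ)

/-- Fibonacci value of a word (most significant digit first):
`valF (w_{k-1} ⋯ w_0) = ∑ w_i F_i`. -/
def valF : List ℕ → ℕ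
  | [] => 0
  | a :: t => a * F t.length + valF t

/-- Fibonacci's complement value:
`valFc (w_{k-1} ⋯ w_0) = ∑ w_i F_i − w_{k-1} F_k`. -/
def valFc (w : List ℕ) : ℤ :=
  (valF w : ℤ) - (w.headD 0 : ℤ) * (F w.length : ℤ)

theorem neutral_prefix_one (w : List ℕ) (hw : ∀ x ∈ w, x ≤ 1) :
    valFc (1 :: 0 :: 1 :: w) = valFc (1 :: w) := by
  have e3 : w.length + 2 + 1 = w.length + 3 := by omega
  have e4 : w.length + 3 + 1 = w.length + 4 := by omega
  have h1 := Nat.fib_add_two (n := w.length + 2)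
  have h2 := Nat.fib_add_two (n := w.length + 3)
  rw [e3, show w.length + 2 + 2 = w.length + 4 from by omega] at h1
  rw [e4, show w.length + 3 + 2 = w.length + 5 from by omega] at h2
  simp only [valFc, valF, List.length_cons, List.headD, F,
    show w.length + 1 + 2 = w.length + 3 from by omega,
    show w.length + 2 + 2 = w.length + 4 from by omega,
    show w.length + 3 + 2 = w.length + 5 from by omega]
  push_cast
  omega
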